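/- For every complex number z = x + iy with |Arg z| ≤ π/4 (i.e., x ≥ |y|), the real part of the error function satisfies Re(erf(z)) ≥ 0, with equality if and only if z = 0. -/

import Mathlib

open Complex MeasureTheory Set Filter Metric Topology

/-- The error function, `erf z = (2/√π) ∫₀^z e^{-u²} du`, integrated along the
segment from `0` to `z` (the integrand is entire, so the path is immaterial). -/
noncomputable def erf (z : ℂ) : ℂ :=
  (2 / Real.sqrt Real.pi : ℝ) * ∫ t in (0:ℝ)..1, z * Complex.exp (-((t : ℂ) * z) ^ 2)

/-- The complementary error function, `erfc z = (2/√π) ∫_z^∞ e^{-u²} du`,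
integrated along the horizontal ray from `z` to `+∞`. -/
noncomputable def erfc (z : ℂ) : ℂ :=
  (2 / Real.sqrt Real.pi : ℝ) * ∫ t in Set.Ioi (0:ℝ), Complex.exp (-(z + (t : ℂ)) ^ 2)

noncomputable def erfSeg (z : ℂ) : ℂ := ∫ t in (0:ℝ)..1, z * Complex.exp (-((t : ℂ) * z) ^ 2)
noncomputable def erfRay (z : ℂ) : ℂ := ∫ t in Set.Ioi (0:ℝ), Complex.exp (-(z + (t : ℂ)) ^ 2)

lemma norm_cexp_ray (z : ℂ) (t : ℝ) :
    ‖Complex.exp (-(z + (t : ℂ)) ^ 2)‖ = Real.exp (z.im ^ 2 - (z.re + t) ^ 2) := by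
  rw [Complex.norm_exp]
  congr 1
  simp [pow_two, Complex.mul_re]

lemma integrable_shift_gauss (a : ℝ) : Integrable (fun t : ℝ => Real.exp (-(t + a) ^ 2)) := by
  have h := (integrable_exp_neg_mul_sq (b := 1) one_pos).comp_add_right a
  simpa using h

lemma integrable_linear_gauss (A a : ℝ) :
    Integrable (fun t : ℝ => (A + t) * Real.exp (-(t + a) ^ 2)) := by
  have h1 : Integrable (fun t : ℝ => (t + a) * Real.exp (-(t + a) ^ 2)) := by
    have := (integrable_mul_exp_neg_mul_sq (b := 1) one_pos).comp_add_right a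
    simpa using this
  have h2 : Integrable (fun t : ℝ => (A - a) * Real.exp (-(t + a) ^ 2)) :=
    (integrable_shift_gauss a).const_mul _
  refine (h1.add h2).congr (Eventually.of_forall fun t => ?_)
  simp only [Pi.add_apply]
  ring

lemma integrableOn_cexp_ray (z : ℂ) :
    IntegrableOn (fun t : ℝ => Complex.exp (-(z + (t : ℂ)) ^ 2)) (Ioi 0) := by
  have hg : IntegrableOn (fun t : ℝ => Real.exp (z.im ^ 2) * Real.exp (-(t + z.re) ^ 2)) (Ioi 0) :=
    ((integrable_shift_gauss z.re).const_mul _).integrableOn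
  refine hg.mono' (Continuous.aestronglyMeasurable (by continuity)) ?_
  refine Eventually.of_forall fun t => ?_
  rw [norm_cexp_ray, ← Real.exp_add]
  apply le_of_eq
  congr 1
  ring

lemma integrable_bound_ray (R K c : ℝ) :
    Integrable (fun t : ℝ => 2 * ((R + t) * Real.exp (K - (t - c) ^ 2))) := by
  have h := (integrable_linear_gauss R (-c)).const_mul (2 * Real.exp K)
  refine h.congr (Eventually.of_forall fun t => ?_)
  show 2 * Real.exp K * ((R + t) * Real.exp (-(t + -c) ^ 2))
      = 2 * ((R + t) * Real.exp (K - (t - c) ^ 2))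
  rw [show K - (t - c) ^ 2 = K + (-(t + -c) ^ 2) by ring, Real.exp_add]
  ring

lemma hasDerivAt_seg_inner (t : ℝ) (x : ℂ) :
    HasDerivAt (fun w : ℂ => w * Complex.exp (-((t : ℂ) * w) ^ 2))
      ((1 - 2 * (t : ℂ) ^ 2 * x ^ 2) * Complex.exp (-((t : ℂ) * x) ^ 2)) x := by
  have h1 : HasDerivAt (fun w : ℂ => -((t : ℂ) * w) ^ 2)
      (-(2 * ((t : ℂ) * x) * (t : ℂ))) x := by
    have h0 : HasDerivAt (fun w : ℂ => (t : ℂ) * w) (t : ℂ) x := by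
      simpa using (hasDerivAt_id x).const_mul (t : ℂ)
    exact (by simpa using (h0.pow 2).neg : HasDerivAt (-(fun w : ℂ => (t : ℂ) * w) ^ 2) _ x)
  have h3 := (hasDerivAt_id x).mul h1.cexp
  refine h3.congr_deriv ?_
  simp only [id_eq]
  ring

lemma seg_inner_integral (z : ℂ) :
    (∫ t in (0:ℝ)..1, (1 - 2 * (t : ℂ) ^ 2 * z ^ 2) * Complex.exp (-((t : ℂ) * z) ^ 2))
      = Complex.exp (-z ^ 2) := by
  have key : ∀ t ∈ Set.uIcc (0:ℝ) 1,
      HasDerivAt (fun s : ℝ => (s : ℂ) * Complex.exp (-((s : ℂ) * z) ^ 2))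
        ((1 - 2 * (t : ℂ) ^ 2 * z ^ 2) * Complex.exp (-((t : ℂ) * z) ^ 2)) t := by
    intro t _
    have h1 : HasDerivAt (fun w : ℂ => -(w * z) ^ 2) (-(2 * ((t : ℂ) * z) * z)) (t : ℂ) := by
      have h0 : HasDerivAt (fun w : ℂ => w * z) z (t : ℂ) := by
        simpa using (hasDerivAt_id (t : ℂ)).mul_const z
      exact (by simpa using (h0.pow 2).neg : HasDerivAt (-(fun w : ℂ => w * z) ^ 2) _ (t : ℂ))
    have h2 := ((hasDerivAt_id (t : ℂ)).mul h1.cexp).comp_ofReal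
    refine h2.congr_deriv ?_
    simp only [id_eq]
    ring
  have hint : IntervalIntegrable
      (fun t : ℝ => (1 - 2 * (t : ℂ) ^ 2 * z ^ 2) * Complex.exp (-((t : ℂ) * z) ^ 2))
      volume 0 1 := (Continuous.intervalIntegrable (by continuity) _ _)
  have := intervalIntegral.integral_eq_sub_of_hasDerivAt key hint
  simpa using this

lemma norm_cexp_seg (x : ℂ) (t : ℝ) :
    ‖Complex.exp (-((t : ℂ) * x) ^ 2)‖ = Real.exp (-(((t : ℂ) * x) ^ 2).re) := by
  rw [Complex.norm_exp, Complex.neg_re]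

lemma hasDerivAt_erfSeg (z₀ : ℂ) : HasDerivAt erfSeg (Complex.exp (-z₀ ^ 2)) z₀ := by
  set R : ℝ := ‖z₀‖ + 1 with hR
  have hRpos : 0 < R := by positivity
  have key := intervalIntegral.hasDerivAt_integral_of_dominated_loc_of_deriv_le
    (F := fun (x : ℂ) (t : ℝ) => x * Complex.exp (-((t : ℂ) * x) ^ 2))
    (F' := fun (x : ℂ) (t : ℝ) => (1 - 2 * (t : ℂ) ^ 2 * x ^ 2) * Complex.exp (-((t : ℂ) * x) ^ 2))
    (x₀ := z₀) (a := 0) (b := 1) (μ := volume) (s := ball z₀ 1)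
    (bound := fun _ => (1 + 2 * R ^ 2) * Real.exp (R ^ 2))
    (ball_mem_nhds z₀ one_pos)
    (Eventually.of_forall fun x => (Continuous.aestronglyMeasurable (by continuity)))
    (Continuous.intervalIntegrable (by continuity) _ _)
    (Continuous.aestronglyMeasurable (by continuity))
    ?_
    (intervalIntegrable_const)
    (Eventually.of_forall fun t _ x _ => hasDerivAt_seg_inner t x)
  · have h2 := key.2
    rwa [seg_inner_integral z₀] at h2
  · refine Eventually.of_forall fun t ht x hx => ?_
    have hxR : ‖x‖ ≤ R := by
      have h3 := mem_ball_iff_norm.mp hx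
      have h4 : ‖x‖ ≤ ‖x - z₀‖ + ‖z₀‖ := by
        simpa using norm_add_le (x - z₀) z₀
      rw [hR]; linarith
    have ht01 : t ∈ Set.Ioc (0:ℝ) 1 := by simpa [Set.uIoc_of_le (zero_le_one)] using ht
    have htabs : |t| ≤ 1 := by
      rw [abs_of_pos ht01.1]; exact ht01.2
    rw [norm_mul, norm_cexp_seg]
    have hb1 : ‖1 - 2 * (t : ℂ) ^ 2 * x ^ 2‖ ≤ 1 + 2 * R ^ 2 := by
      refine (norm_sub_le _ _).trans ?_
      have he : ‖2 * (t : ℂ) ^ 2 * x ^ 2‖ = 2 * |t| ^ 2 * ‖x‖ ^ 2 := by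
        simp [norm_mul, norm_pow, Complex.norm_real, Real.norm_eq_abs]
      rw [norm_one, he]
      have ha : |t| ^ 2 ≤ 1 := by nlinarith [abs_nonneg t]
      have hbn : ‖x‖ ^ 2 ≤ R ^ 2 := by nlinarith [norm_nonneg x]
      nlinarith [mul_le_mul ha hbn (by positivity : (0:ℝ) ≤ ‖x‖ ^ 2) zero_le_one]
    have hb2 : Real.exp (-(((t : ℂ) * x) ^ 2).re) ≤ Real.exp (R ^ 2) := by
      rw [Real.exp_le_exp]
      have h5 : |(((t : ℂ) * x) ^ 2).re| ≤ ‖((t : ℂ) * x) ^ 2‖ := Complex.abs_re_le_norm _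
      have h6 : ‖((t : ℂ) * x) ^ 2‖ ≤ R ^ 2 := by
        rw [norm_pow, norm_mul, Complex.norm_real, Real.norm_eq_abs]
        have h8 : |t| * ‖x‖ ≤ R := by
          have := mul_le_mul htabs hxR (norm_nonneg _) zero_le_one
          linarith
        exact pow_le_pow_left₀ (by positivity) h8 2
      nlinarith [abs_nonneg ((((t : ℂ) * x) ^ 2).re), neg_abs_le ((((t : ℂ) * x) ^ 2).re)]
    calc ‖1 - 2 * (t : ℂ) ^ 2 * x ^ 2‖ * Real.exp (-(((t : ℂ) * x) ^ 2).re)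
        ≤ (1 + 2 * R ^ 2) * Real.exp (R ^ 2) := by
          apply mul_le_mul hb1 hb2 (Real.exp_pos _).le (by positivity)

lemma hasDerivAt_ray_inner (t : ℝ) (x : ℂ) :
    HasDerivAt (fun w : ℂ => Complex.exp (-(w + (t : ℂ)) ^ 2))
      (-2 * (x + (t : ℂ)) * Complex.exp (-(x + (t : ℂ)) ^ 2)) x := by
  have h1 : HasDerivAt (fun w : ℂ => -(w + (t : ℂ)) ^ 2) (-(2 * (x + (t : ℂ)))) x := by
    have h0 : HasDerivAt (fun w : ℂ => w + (t : ℂ)) 1 x := (hasDerivAt_id x).add_const _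
    exact (by simpa using (h0.pow 2).neg : HasDerivAt (-(fun w : ℂ => w + (t : ℂ)) ^ 2) _ x)
  have h2 := h1.cexp
  refine h2.congr_deriv ?_
  ring

lemma hasDerivAt_ray_t (z : ℂ) (t : ℝ) :
    HasDerivAt (fun s : ℝ => Complex.exp (-(z + (s : ℂ)) ^ 2))
      (-2 * (z + (t : ℂ)) * Complex.exp (-(z + (t : ℂ)) ^ 2)) t := by
  have h1 : HasDerivAt (fun w : ℂ => -(z + w) ^ 2) (-(2 * (z + (t : ℂ)))) (t : ℂ) := by
    have h0 : HasDerivAt (fun w : ℂ => z + w) 1 (t : ℂ) := (hasDerivAt_id _).const_add z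
    exact (by simpa using (h0.pow 2).neg : HasDerivAt (-(fun w : ℂ => z + w) ^ 2) _ (t : ℂ))
  have h2 := h1.cexp.comp_ofReal
  convert h2 using 1
  ring

lemma tendsto_ray (z : ℂ) :
    Tendsto (fun t : ℝ => Complex.exp (-(z + (t : ℂ)) ^ 2)) atTop (𝓝 0) := by
  rw [tendsto_zero_iff_norm_tendsto_zero]
  simp only [norm_cexp_ray]
  refine Real.tendsto_exp_atBot.comp ?_
  have h0 : Tendsto (fun t : ℝ => z.re + t) atTop atTop :=
    tendsto_atTop_add_const_left _ _ tendsto_id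
  have h1 : Tendsto (fun t : ℝ => (z.re + t) ^ 2) atTop atTop :=
    (tendsto_pow_atTop two_ne_zero).comp h0
  have h2 : Tendsto (fun t : ℝ => -(z.re + t) ^ 2) atTop atBot :=
    tendsto_neg_atTop_atBot.comp h1
  have h3 := tendsto_atBot_add_const_left atTop (z.im ^ 2) h2
  simpa [sub_eq_add_neg] using h3

lemma hasDerivAt_erfRay (z₀ : ℂ) : HasDerivAt erfRay (-Complex.exp (-z₀ ^ 2)) z₀ := by
  set R : ℝ := ‖z₀‖ + 1 with hR
  set c : ℝ := |z₀.re| + 1 with hc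
  set B : ℝ := (|z₀.im| + 1) ^ 2 with hB
  have key := hasDerivAt_integral_of_dominated_loc_of_deriv_le
    (μ := volume.restrict (Ioi (0:ℝ)))
    (F := fun (x : ℂ) (t : ℝ) => Complex.exp (-(x + (t : ℂ)) ^ 2))
    (F' := fun (x : ℂ) (t : ℝ) => -2 * (x + (t : ℂ)) * Complex.exp (-(x + (t : ℂ)) ^ 2))
    (x₀ := z₀) (s := ball z₀ 1)
    (bound := fun t => 2 * ((R + t) * Real.exp ((B + c ^ 2) - (t - c) ^ 2)))
    (ball_mem_nhds z₀ one_pos)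
    (Eventually.of_forall fun x => (Continuous.aestronglyMeasurable (by continuity)))
    (integrableOn_cexp_ray z₀)
    (Continuous.aestronglyMeasurable (by continuity))
    ?_
    ((integrable_bound_ray R (B + c ^ 2) c).restrict)
    (Eventually.of_forall fun t x _ => hasDerivAt_ray_inner t x)
  · have h2 := key.2
    have hval : (∫ t in Ioi (0:ℝ), -2 * (z₀ + (t : ℂ)) * Complex.exp (-(z₀ + (t : ℂ)) ^ 2))
        = -Complex.exp (-z₀ ^ 2) := by
      have := integral_Ioi_of_hasDerivAt_of_tendsto' (a := 0)
        (f := fun s : ℝ => Complex.exp (-(z₀ + (s : ℂ)) ^ 2))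
        (f' := fun t : ℝ => -2 * (z₀ + (t : ℂ)) * Complex.exp (-(z₀ + (t : ℂ)) ^ 2))
        (fun t _ => hasDerivAt_ray_t z₀ t) key.1 (tendsto_ray z₀)
      simpa using this
    rwa [hval] at h2
  · filter_upwards [ae_restrict_mem measurableSet_Ioi] with t ht x hx
    have htpos : (0:ℝ) < t := ht
    have hdist : ‖x - z₀‖ < 1 := mem_ball_iff_norm.mp hx
    have hre : |x.re - z₀.re| ≤ ‖x - z₀‖ := by
      simpa using Complex.abs_re_le_norm (x - z₀)
    have him : |x.im - z₀.im| ≤ ‖x - z₀‖ := by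
      simpa using Complex.abs_im_le_norm (x - z₀)
    have hxre : |x.re| ≤ c := by
      rw [hc]
      have := abs_sub_abs_le_abs_sub x.re z₀.re
      linarith
    have hxim : |x.im| ≤ |z₀.im| + 1 := by
      have := abs_sub_abs_le_abs_sub x.im z₀.im
      linarith
    have hxn : ‖x‖ ≤ R := by
      have h4 : ‖x‖ ≤ ‖x - z₀‖ + ‖z₀‖ := by
        simpa using norm_add_le (x - z₀) z₀
      rw [hR]; linarith
    have hnorm : ‖-2 * (x + (t : ℂ)) * Complex.exp (-(x + (t : ℂ)) ^ 2)‖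
        = 2 * ‖x + (t : ℂ)‖ * Real.exp (x.im ^ 2 - (x.re + t) ^ 2) := by
      rw [norm_mul, norm_mul, norm_cexp_ray, norm_neg]
      norm_num
    rw [hnorm]
    have hb1 : ‖x + (t : ℂ)‖ ≤ R + t := by
      refine (norm_add_le _ _).trans ?_
      have : ‖(t : ℂ)‖ = t := by
        rw [Complex.norm_real, Real.norm_eq_abs, abs_of_pos htpos]
      rw [this]
      linarith
    have hb2 : x.im ^ 2 - (x.re + t) ^ 2 ≤ (B + c ^ 2) - (t - c) ^ 2 := by
      have h5 : x.im ^ 2 ≤ B := by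
        rw [hB]
        have h9 : x.im ^ 2 = |x.im| ^ 2 := (_root_.sq_abs _).symm
        rw [h9]
        exact pow_le_pow_left₀ (abs_nonneg _) hxim 2
      have h6 : -(x.re + t) ^ 2 ≤ c ^ 2 - (t - c) ^ 2 := by
        have h7 : -c ≤ x.re := neg_le_of_abs_le hxre
        nlinarith [sq_nonneg x.re, mul_le_mul_of_nonneg_right h7 htpos.le]
      linarith
    calc 2 * ‖x + (t : ℂ)‖ * Real.exp (x.im ^ 2 - (x.re + t) ^ 2)
        ≤ 2 * (R + t) * Real.exp ((B + c ^ 2) - (t - c) ^ 2) := by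
          have := mul_le_mul hb1 (Real.exp_le_exp.mpr hb2) (Real.exp_pos _).le
            (by positivity : (0:ℝ) ≤ R + t)
          nlinarith [this]
      _ = 2 * ((R + t) * Real.exp ((B + c ^ 2) - (t - c) ^ 2)) := by ring

lemma erfSeg_add_erfRay (z : ℂ) :
    erfSeg z + erfRay z = ((Real.sqrt Real.pi / 2 : ℝ) : ℂ) := by
  have hd : ∀ w : ℂ, HasDerivAt (fun u => erfSeg u + erfRay u) 0 w := by
    intro w
    have := (hasDerivAt_erfSeg w).add (hasDerivAt_erfRay w)
    exact this.congr_deriv (by simp)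
  have hconst : erfSeg z + erfRay z = erfSeg 0 + erfRay 0 := by
    exact is_const_of_fderiv_eq_zero (𝕜 := ℂ)
      (fun w => (hd w).differentiableAt)
      (fun w => by
        rw [(hd w).hasFDerivAt.fderiv]
        ext
        simp) z 0
  have h0 : erfSeg 0 = 0 := by
    simp [erfSeg]
  have hray0 : erfRay 0 = ((Real.sqrt Real.pi / 2 : ℝ) : ℂ) := by
    have hcast : ∀ t : ℝ, Complex.exp (-((0:ℂ) + (t : ℂ)) ^ 2)
        = ((Real.exp (-t ^ 2) : ℝ) : ℂ) := by
      intro t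
      rw [zero_add, Complex.ofReal_exp]
      norm_cast
    rw [erfRay]
    simp only [hcast]
    calc (∫ t in Ioi (0:ℝ), ((Real.exp (-t ^ 2) : ℝ) : ℂ))
        = ((∫ t in Ioi (0:ℝ), Real.exp (-t ^ 2) : ℝ) : ℂ) := integral_ofReal
      _ = ((Real.sqrt Real.pi / 2 : ℝ) : ℂ) := by
          norm_cast
          have h := integral_gaussian_Ioi 1
          simpa using h
  rw [hconst, h0, hray0, zero_add]

lemma re_erfRay_lt (z : ℂ) (hx : 0 < z.re) (hy : z.im ^ 2 ≤ z.re ^ 2) :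
    (erfRay z).re < Real.sqrt Real.pi / 2 := by
  have h1 : (erfRay z).re ≤ ‖erfRay z‖ := by
    exact Complex.re_le_norm _
  have h2 : ‖erfRay z‖ ≤ ∫ t in Ioi (0:ℝ), ‖Complex.exp (-(z + (t : ℂ)) ^ 2)‖ :=
    norm_integral_le_integral_norm _
  have h3 : (∫ t in Ioi (0:ℝ), ‖Complex.exp (-(z + (t : ℂ)) ^ 2)‖)
      = Real.exp (z.im ^ 2 - z.re ^ 2) * ∫ t in Ioi (0:ℝ), Real.exp (-t ^ 2 - 2 * z.re * t) := by
    simp only [norm_cexp_ray]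
    rw [← integral_const_mul]
    refine setIntegral_congr_fun measurableSet_Ioi fun t _ => ?_
    rw [← Real.exp_add]
    congr 1
    ring
  have hint1 : IntegrableOn (fun t : ℝ => Real.exp (-t ^ 2)) (Ioi 0) := by
    have := integrable_exp_neg_mul_sq (b := 1) one_pos
    simpa using this.integrableOn
  have hint2 : IntegrableOn (fun t : ℝ => Real.exp (-t ^ 2 - 2 * z.re * t)) (Ioi 0) := by
    have h := ((integrable_shift_gauss z.re).const_mul (Real.exp (z.re ^ 2))).integrableOn
      (s := Ioi 0)
    refine h.congr_fun ?_ measurableSet_Ioi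
    intro t _
    show Real.exp (z.re ^ 2) * Real.exp (-(t + z.re) ^ 2) = Real.exp (-t ^ 2 - 2 * z.re * t)
    rw [← Real.exp_add]
    congr 1
    ring
  have hgauss : (∫ t in Ioi (0:ℝ), Real.exp (-t ^ 2)) = Real.sqrt Real.pi / 2 := by
    have h := integral_gaussian_Ioi 1
    simpa using h
  have hposint : 0 < ∫ t in Ioi (0:ℝ),
      (Real.exp (-t ^ 2) - Real.exp (-t ^ 2 - 2 * z.re * t)) := by
    rw [setIntegral_pos_iff_support_of_nonneg_ae]
    · have hsub : Ioi (0:ℝ) ⊆ Function.support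
          (fun t => Real.exp (-t ^ 2) - Real.exp (-t ^ 2 - 2 * z.re * t)) := by
        intro t htpos
        have htp : (0:ℝ) < t := htpos
        have hlt : Real.exp (-t ^ 2 - 2 * z.re * t) < Real.exp (-t ^ 2) := by
          apply Real.exp_lt_exp.mpr
          nlinarith [mul_pos hx htp]
        simp only [Function.mem_support]
        intro hcontra
        nlinarith [hlt]
      have hmono := measure_mono (μ := (volume : Measure ℝ)) (subset_inter hsub (subset_refl (Ioi 0)))
      have hIoi : (volume : Measure ℝ) (Ioi 0) = ⊤ := Real.volume_Ioi
      rw [hIoi] at hmono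
      exact lt_of_lt_of_le (by norm_num) hmono
    · filter_upwards [ae_restrict_mem measurableSet_Ioi] with t htpos
      have htp : (0:ℝ) < t := htpos
      have : Real.exp (-t ^ 2 - 2 * z.re * t) ≤ Real.exp (-t ^ 2) := by
        apply Real.exp_le_exp.mpr
        nlinarith [mul_pos hx htp]
      simp only [Pi.zero_apply]
      linarith
    · exact hint1.sub hint2
  have hTlt : (∫ t in Ioi (0:ℝ), Real.exp (-t ^ 2 - 2 * z.re * t)) < Real.sqrt Real.pi / 2 := by
    rw [integral_sub hint1 hint2] at hposint
    linarith [hgauss ▸ hposint]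
  have hTnonneg : 0 ≤ ∫ t in Ioi (0:ℝ), Real.exp (-t ^ 2 - 2 * z.re * t) :=
    setIntegral_nonneg measurableSet_Ioi fun t _ => (Real.exp_pos _).le
  have hfac : Real.exp (z.im ^ 2 - z.re ^ 2) ≤ 1 := by
    rw [Real.exp_le_one_iff]
    linarith
  calc (erfRay z).re ≤ ‖erfRay z‖ := h1
    _ ≤ ∫ t in Ioi (0:ℝ), ‖Complex.exp (-(z + (t : ℂ)) ^ 2)‖ := h2
    _ = Real.exp (z.im ^ 2 - z.re ^ 2) * ∫ t in Ioi (0:ℝ), Real.exp (-t ^ 2 - 2 * z.re * t) := h3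
    _ ≤ ∫ t in Ioi (0:ℝ), Real.exp (-t ^ 2 - 2 * z.re * t) := by
        nlinarith [hTnonneg, hfac, Real.exp_pos (z.im ^ 2 - z.re ^ 2)]
    _ < Real.sqrt Real.pi / 2 := hTlt

theorem re_erf_nonneg_of_arg (z : ℂ) (hz : |z.im| ≤ z.re) :
    0 ≤ (erf z).re ∧ ((erf z).re = 0 ↔ z = 0) := by
  have hx0 : 0 ≤ z.re := (abs_nonneg _).trans hz
  have hsqrtpos : 0 < Real.sqrt Real.pi := Real.sqrt_pos.mpr Real.pi_pos
  by_cases hz0 : z = 0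
  · subst hz0
    have h0 : erf 0 = 0 := by
      simp [erf]
    rw [h0]
    simp
  · have hxpos : 0 < z.re := by
      rcases hx0.lt_or_eq with h | h
      · exact h
      · exfalso
        apply hz0
        have him : z.im = 0 := by
          have h5 : |z.im| ≤ 0 := by rw [h]; exact hz
          exact abs_nonpos_iff.mp h5
        exact Complex.ext h.symm him
    have hy2 : z.im ^ 2 ≤ z.re ^ 2 := by
      have h6 : |z.im| ^ 2 ≤ z.re ^ 2 := pow_le_pow_left₀ (abs_nonneg _) hz 2
      rwa [_root_.sq_abs] at h6
    have hlt := re_erfRay_lt z hxpos hy2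
    have hG : erfSeg z = ((Real.sqrt Real.pi / 2 : ℝ) : ℂ) - erfRay z := by
      have h7 := erfSeg_add_erfRay z
      linear_combination h7
    have herf : erf z = ((2 / Real.sqrt Real.pi : ℝ) : ℂ)
        * (((Real.sqrt Real.pi / 2 : ℝ) : ℂ) - erfRay z) := by
      rw [show erf z = ((2 / Real.sqrt Real.pi : ℝ) : ℂ) * erfSeg z from rfl, hG]
    have hre : (erf z).re = (2 / Real.sqrt Real.pi) * (Real.sqrt Real.pi / 2 - (erfRay z).re) := by
      rw [herf, Complex.re_ofReal_mul, Complex.sub_re, Complex.ofReal_re]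
    have hpos : 0 < (erf z).re := by
      rw [hre]
      apply mul_pos
      · positivity
      · linarith
    exact ⟨hpos.le, ⟨fun h => absurd h hpos.ne', fun h => absurd h hz0⟩⟩
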